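/- If φ satisfies φ(φ(x)z)/z = φ(x(z+1))/(z+1) for all admissible x and z (the functional equation rewritten), then for every n ∈ ℕ, (1/n)·φ(nx) equals the n-fold iterate φ∘φ∘⋯∘φ(x). -/
import Mathlib


theorem stmt18 {k : ℕ} (φ : (Fin k → ℝ) → (Fin k → ℝ))
    (heq : ∀ (x : Fin k → ℝ) (z : ℝ), z ≠ 0 → z + 1 ≠ 0 →
      (1 / z) • φ (z • φ x) = (1 / (z + 1)) • φ ((z + 1) • x)) :
    ∀ n : ℕ, 0 < n → ∀ x : Fin k → ℝ,
      (1 / (n : ℝ)) • φ ((n : ℝ) • x) = φ^[n] x := by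
  intro n
  induction n with
  | zero => intro h; exact absurd h (lt_irrefl 0)
  | succ m ih =>
    intro _ x
    rcases Nat.eq_zero_or_pos m with hm | hm
    · subst hm; simp
    · have hmz : (m : ℝ) ≠ 0 := Nat.cast_ne_zero.mpr hm.ne'
      have hmz1 : (m : ℝ) + 1 ≠ 0 := by positivity
      have h := heq x (m : ℝ) hmz hmz1
      rw [Function.iterate_succ_apply, ← ih hm (φ x)]
      push_cast
      rw [h]
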